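/- Let d₁, d₂, c, λ ∈ ℝ, and let a be the 4×4 real matrix with rows (0,0,0,1), (0,0,−1,0), (−c,−d₂,0,0), (d₁,c,0,0). Set m = (d₁+d₂)/2, r = (d₁−d₂)/2, and R = √(r²+c²). Then det(λ·I − a) = (λ² − (m+R))·(λ² − (m−R)). -/

import Mathlib

open Matrix

/-- Characteristic polynomial computation (equation (4.14)) for the matrix of
the plane-wave crystal system:
`det(λI − a) = (λ² − (m+R))(λ² − (m−R))` with `m = (d₁+d₂)/2`, `r = (d₁−d₂)/2`,
`R = √(r²+c²)`. -/
theorem charpoly_planewave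
    (d₁ d₂ c lam : ℝ) :
    Matrix.det
        (lam • (1 : Matrix (Fin 4) (Fin 4) ℝ) -
          !![0, 0, 0, 1;
             0, 0, -1, 0;
             -c, -d₂, 0, 0;
             d₁, c, 0, 0])
      = (lam ^ 2 - ((d₁ + d₂) / 2 + Real.sqrt (((d₁ - d₂) / 2) ^ 2 + c ^ 2))) *
        (lam ^ 2 - ((d₁ + d₂) / 2 - Real.sqrt (((d₁ - d₂) / 2) ^ 2 + c ^ 2))) := by
  have h : Real.sqrt (((d₁ - d₂) / 2) ^ 2 + c ^ 2) ^ 2 = ((d₁ - d₂) / 2) ^ 2 + c ^ 2 :=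
    Real.sq_sqrt (by positivity)
  simp [Matrix.det_succ_row_zero, Fin.sum_univ_succ, Matrix.one_apply, Fin.succ_ne_zero, Fin.succAbove, show Fin.castSucc 2 = (2:Fin 4) from rfl]
  nlinarith [h, sq_nonneg lam]
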